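/- Let u, v ∈ ℝ with sin(πv) ≠ 0. Then lim_{q→1⁻} [(1−q^u) ∏_{j=1}^∞ (1−q^{j+u})(1−q^{j−u})] / [(1−q^v) ∏_{j=1}^∞ (1−q^{j+v})(1−q^{j−v})] = sin(πu)/sin(πv), the limit being taken over real q with 0 < q < 1. -/

import Mathlib

open Filter Real Set Finset

namespace ThetaAux

noncomputable def K (a : ℝ) : ℝ := a ^ 2 * Real.exp |a|

noncomputable def NN (a : ℝ) : ℕ := ⌈Real.sqrt (2 * K a)⌉₊

lemma K_nonneg (a : ℝ) : 0 ≤ K a := mul_nonneg (sq_nonneg a) (Real.exp_pos _).le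

lemma sq_le_K (a : ℝ) : a ^ 2 ≤ K a := by
  have h := Real.one_le_exp (abs_nonneg a)
  calc a ^ 2 = a ^ 2 * 1 := (mul_one _).symm
    _ ≤ a ^ 2 * Real.exp |a| := mul_le_mul_of_nonneg_left h (sq_nonneg a)

lemma twoK_le (a : ℝ) (j : ℕ) : 2 * K a ≤ ((j : ℝ) + NN a + 1) ^ 2 := by
  have h0 : (0:ℝ) ≤ 2 * K a := by linarith [K_nonneg a]
  have h1 : Real.sqrt (2 * K a) ≤ (NN a : ℝ) := Nat.le_ceil _
  have h2 : Real.sqrt (2 * K a) ≤ (j : ℝ) + NN a + 1 := by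
    have : (0:ℝ) ≤ (j:ℝ) := Nat.cast_nonneg j
    linarith
  calc 2 * K a = Real.sqrt (2 * K a) ^ 2 := (Real.sq_sqrt h0).symm
    _ ≤ ((j : ℝ) + NN a + 1) ^ 2 := pow_le_pow_left₀ (Real.sqrt_nonneg _) h2 2

noncomputable def eps (c q a : ℝ) : ℝ := q ^ c * (q ^ a + q ^ (-a) - 2) / (1 - q ^ c) ^ 2

noncomputable def rat (j : ℕ) (q a : ℝ) : ℝ := 1 - eps ((j:ℝ) + 1) q a

/-- algebraic key identity -/
lemma factor_eq {q : ℝ} (hq0 : 0 < q) (hq1 : q < 1) (a : ℝ) {c : ℝ} (hc : 0 < c) :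
    (1 - q ^ (c + a)) * (1 - q ^ (c - a)) = (1 - q ^ c) ^ 2 * (1 - eps c q a) := by
  have hqc : q ^ c < 1 := Real.rpow_lt_one hq0.le hq1 hc
  have hne : (1 - q ^ c) ≠ 0 := by linarith
  have ha : q ^ a ≠ 0 := (Real.rpow_pos_of_pos hq0 a).ne'
  rw [eps, Real.rpow_add hq0, Real.rpow_sub hq0, Real.rpow_neg hq0.le]
  field_simp
  ring

lemma d_nonneg {q : ℝ} (hq0 : 0 < q) (a : ℝ) : 0 ≤ q ^ a + q ^ (-a) - 2 := by
  have h1 : 0 < q ^ a := Real.rpow_pos_of_pos hq0 a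
  have h2 : q ^ (-a) = (q ^ a)⁻¹ := by rw [Real.rpow_neg hq0.le]
  rw [h2]
  have h3 : q ^ a * (q ^ a)⁻¹ = 1 := mul_inv_cancel₀ h1.ne'
  nlinarith [sq_nonneg (q ^ a - 1), inv_pos.mpr h1]

lemma eps_nonneg {q : ℝ} (hq0 : 0 < q) (a c : ℝ) : 0 ≤ eps c q a := by
  have := d_nonneg hq0 a
  have h1 : 0 < q ^ c := Real.rpow_pos_of_pos hq0 c
  have : 0 ≤ q ^ c * (q ^ a + q ^ (-a) - 2) := by positivity
  exact div_nonneg this (sq_nonneg _)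

/-- exp(-s)/(1-exp(-s))^2 ≤ 1/s^2 for s > 0 -/
lemma exp_bound1 {s : ℝ} (hs : 0 < s) :
    Real.exp (-s) / (1 - Real.exp (-s)) ^ 2 ≤ 1 / s ^ 2 := by
  have hsinh : s / 2 ≤ Real.sinh (s / 2) := Real.self_le_sinh_iff.mpr (by linarith)
  rw [Real.sinh_eq] at hsinh
  have hkey : s ≤ Real.exp (s/2) - Real.exp (-(s/2)) := by linarith
  have he : 1 - Real.exp (-s) = Real.exp (-(s/2)) * (Real.exp (s/2) - Real.exp (-(s/2))) := by
    rw [mul_sub, ← Real.exp_add, ← Real.exp_add]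
    rw [show -(s/2) + s/2 = 0 by ring, show -(s/2) + -(s/2) = -s by ring, Real.exp_zero]
  have hepos : 0 < Real.exp (-(s/2)) := Real.exp_pos _
  have hpos : 0 < Real.exp (s/2) - Real.exp (-(s/2)) := lt_of_lt_of_le hs hkey
  have h1 : 0 < 1 - Real.exp (-s) := by rw [he]; positivity
  rw [div_le_div_iff₀ (by positivity) (by positivity)]
  have hsq : (1 - Real.exp (-s))^2 = Real.exp (-s) * (Real.exp (s/2) - Real.exp (-(s/2)))^2 := by
    rw [he, mul_pow]
    congr 1
    rw [sq, ← Real.exp_add]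
    ring_nf
  rw [hsq]
  have h2 : s ^ 2 ≤ (Real.exp (s/2) - Real.exp (-(s/2))) ^ 2 :=
    pow_le_pow_left₀ hs.le hkey 2
  nlinarith [Real.exp_pos (-s)]

/-- exp s + exp (-s) - 2 ≤ s^2 * exp s  for s ≥ 0 -/
lemma exp_bound2 {s : ℝ} (hs : 0 ≤ s) :
    Real.exp s + Real.exp (-s) - 2 ≤ s ^ 2 * Real.exp s := by
  have ha : Real.exp (s/2) ^ 2 = Real.exp s := by rw [sq, ← Real.exp_add]; norm_num
  have hb : Real.exp (-(s/2)) ^ 2 = Real.exp (-s) := by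
    rw [sq, ← Real.exp_add]; ring_nf
  have hc : Real.exp (s/2) * Real.exp (-(s/2)) = 1 := by
    rw [← Real.exp_add]; rw [show s/2 + -(s/2) = 0 by ring, Real.exp_zero]
  have h1 : Real.exp s + Real.exp (-s) - 2 = (Real.exp (s/2) - Real.exp (-(s/2))) ^ 2 := by
    rw [sub_sq, ha, hb]; rw [show 2 * Real.exp (s/2) * Real.exp (-(s/2)) = 2 * (Real.exp (s/2) * Real.exp (-(s/2))) by ring, hc]; ring
  have h2 : Real.exp (s/2) - Real.exp (-(s/2)) ≤ s * Real.exp (s/2) := by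
    have := Real.add_one_le_exp (-s)
    have hm : Real.exp (s/2) * Real.exp (-s) = Real.exp (-(s/2)) := by
      rw [← Real.exp_add]; ring_nf
    nlinarith [Real.exp_pos (s/2)]
  have h3 : 0 ≤ Real.exp (s/2) - Real.exp (-(s/2)) := by
    have := Real.exp_le_exp.mpr (by linarith : -(s/2) ≤ s/2)
    linarith
  have h4 : (Real.exp (s/2) - Real.exp (-(s/2)))^2 ≤ (s * Real.exp (s/2))^2 :=
    pow_le_pow_left₀ h3 h2 2
  have h5 : (s * Real.exp (s/2))^2 = s^2 * Real.exp s := by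
    rw [mul_pow, ha]
  linarith [h1, h4, h5]

lemma eps_le {q : ℝ} (hq0 : 0 < q) (hq1 : q < 1) (hqe : Real.exp (-1) ≤ q)
    (a : ℝ) {c : ℝ} (hc : 0 < c) : eps c q a ≤ K a / c ^ 2 := by
  set t : ℝ := -Real.log q with ht
  have hlog : Real.log q < 0 := Real.log_neg hq0 hq1
  have ht0 : 0 < t := by simpa [ht] using hlog
  have ht1 : t ≤ 1 := by
    have := (Real.le_log_iff_exp_le hq0).mpr hqe
    simp only [ht]; linarith
  have hrp : ∀ x : ℝ, q ^ x = Real.exp (-(x * t)) := by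
    intro x
    rw [Real.rpow_def_of_pos hq0]
    congr 1
    simp [ht]; ring
  -- pieces
  have hct : 0 < c * t := mul_pos hc ht0
  have h1 : q ^ c / (1 - q ^ c) ^ 2 ≤ 1 / (c * t) ^ 2 := by
    rw [hrp c]; exact exp_bound1 hct
  have hd : q ^ a + q ^ (-a) - 2 ≤ K a * t ^ 2 := by
    rw [hrp a, hrp (-a)]
    have habs : Real.exp (-(a * t)) + Real.exp (-(-a * t)) =
        Real.exp (|a| * t) + Real.exp (-(|a| * t)) := by
      rcases abs_cases a with ⟨h, _⟩ | ⟨h, _⟩ <;> rw [h] <;> ring_nf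
    have h2 := exp_bound2 (s := |a| * t) (by positivity)
    have h3 : (|a| * t) ^ 2 * Real.exp (|a| * t) ≤ a ^ 2 * t ^ 2 * Real.exp |a| := by
      have he : Real.exp (|a| * t) ≤ Real.exp |a| := by
        apply Real.exp_le_exp.mpr
        nlinarith [abs_nonneg a]
      have hsq : (|a| * t) ^ 2 = a ^ 2 * t ^ 2 := by
        rw [mul_pow, sq_abs]
      rw [hsq]
      exact mul_le_mul_of_nonneg_left he (by positivity)
    have : Real.exp (-(a * t)) + Real.exp (-(-a * t)) - 2 ≤ a ^ 2 * t ^ 2 * Real.exp |a| := by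
      rw [habs]; linarith
    calc Real.exp (-(a * t)) + Real.exp (-(-a * t)) - 2 ≤ a ^ 2 * t ^ 2 * Real.exp |a| := this
      _ = K a * t ^ 2 := by rw [K]; ring
  -- combine
  have hqcpos : 0 < q ^ c := Real.rpow_pos_of_pos hq0 c
  have hqc1 : q ^ c < 1 := Real.rpow_lt_one hq0.le hq1 hc
  have hqcl : 0 < 1 - q ^ c := by linarith
  have hden : 0 < (1 - q ^ c) ^ 2 := by positivity
  have hdpos : 0 ≤ q ^ a + q ^ (-a) - 2 := by
    have h1 : 0 < q ^ a := Real.rpow_pos_of_pos hq0 a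
    have h2 : q ^ (-a) = (q ^ a)⁻¹ := by rw [Real.rpow_neg hq0.le]
    rw [h2]
    have h3 : q ^ a * (q ^ a)⁻¹ = 1 := mul_inv_cancel₀ h1.ne'
    nlinarith [sq_nonneg (q ^ a - 1), inv_pos.mpr h1]
  have hKnn : 0 ≤ K a := mul_nonneg (sq_nonneg a) (Real.exp_pos _).le
  have heq : eps c q a = (q ^ c / (1 - q ^ c) ^ 2) * (q ^ a + q ^ (-a) - 2) := by
    rw [eps]; ring
  have step : eps c q a ≤ (1 / (c * t) ^ 2) * (K a * t ^ 2) := by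
    rw [heq]
    exact mul_le_mul h1 hd hdpos (by positivity)
  calc eps c q a ≤ (1 / (c * t) ^ 2) * (K a * t ^ 2) := step
    _ = K a / c ^ 2 := by
      field_simp


lemma slope_tendsto (a : ℝ) :
    Tendsto (fun q : ℝ => (1 - q ^ a) / (1 - q)) (nhdsWithin 1 (Ioo (0:ℝ) 1)) (nhds a) := by
  have h : HasDerivAt (fun x : ℝ => x ^ a) (a * (1:ℝ) ^ (a - 1)) 1 :=
    Real.hasDerivAt_rpow_const (Or.inl one_ne_zero)
  rw [hasDerivAt_iff_tendsto_slope] at h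
  have h2 : Tendsto (slope (fun x : ℝ => x ^ a) 1) (nhdsWithin 1 (Ioo (0:ℝ) 1)) (nhds a) := by
    have := h.mono_left (nhdsWithin_mono (1:ℝ) (fun x hx => ne_of_lt hx.2 : Ioo (0:ℝ) 1 ⊆ {(1:ℝ)}ᶜ))
    simpa using this
  apply h2.congr'
  filter_upwards [eventually_mem_nhdsWithin] with q hq
  rw [slope_def_field]
  rw [div_eq_div_iff]
  · simp [Real.one_rpow]; ring
  · exact sub_ne_zero.mpr (ne_of_lt hq.2)
  · exact sub_ne_zero.mpr (fun h => (ne_of_lt hq.2) h.symm)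

lemma rpow_tendsto (c : ℝ) :
    Tendsto (fun q : ℝ => q ^ c) (nhdsWithin 1 (Ioo (0:ℝ) 1)) (nhds 1) := by
  have h : ContinuousAt (fun q : ℝ => q ^ c) 1 :=
    Real.continuousAt_rpow_const 1 c (Or.inl one_ne_zero)
  have := h.tendsto.mono_left (nhdsWithin_le_nhds (s := Ioo (0:ℝ) 1))
  simpa [Real.one_rpow] using this

lemma eps_tendsto (a : ℝ) {c : ℝ} (hc : 0 < c) :
    Tendsto (fun q : ℝ => eps c q a) (nhdsWithin 1 (Ioo (0:ℝ) 1)) (nhds (a ^ 2 / c ^ 2)) := by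
  have key : Tendsto (fun q : ℝ => q ^ (c - a) * ((1 - q ^ a) / (1 - q)) ^ 2 /
      (((1 - q ^ c) / (1 - q)) ^ 2)) (nhdsWithin 1 (Ioo (0:ℝ) 1)) (nhds (a ^ 2 / c ^ 2)) := by
    have h1 := (rpow_tendsto (c - a)).mul ((slope_tendsto a).pow 2)
    have h2 := (slope_tendsto c).pow 2
    have h3 := h1.div h2 (by positivity : (c:ℝ) ^ 2 ≠ 0)
    rw [one_mul] at h3
    exact h3
  apply key.congr'
  filter_upwards [eventually_mem_nhdsWithin] with q hq
  have hq0 : 0 < q := hq.1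
  have hq1 : q < 1 := hq.2
  have hne : (1 - q) ≠ 0 := sub_ne_zero.mpr (ne_of_gt (by linarith))
  have hqc1 : q ^ c < 1 := Real.rpow_lt_one hq0.le hq1 hc
  have hnec : (1 - q ^ c) ≠ 0 := sub_ne_zero.mpr (ne_of_gt (by linarith))
  have hsub : q ^ (c - a) = q ^ c * q ^ (-a) := by
    rw [← Real.rpow_add hq0]; ring_nf
  have hminus : q ^ (-a) * (1 - q ^ a) ^ 2 = q ^ a + q ^ (-a) - 2 := by
    have h2 : q ^ (-a) * (q ^ a * q ^ a) = q ^ a := by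
      rw [← Real.rpow_add hq0, ← Real.rpow_add hq0]; ring_nf
    have h3 : q ^ (-a) * q ^ a = 1 := by
      rw [← Real.rpow_add hq0]; norm_num
    nlinarith [h2, h3]
  rw [eps]
  field_simp
  rw [hsub]
  nlinarith [hminus]


lemma abs_log_one_sub_le {x : ℝ} (h0 : 0 ≤ x) (h1 : x < 1) :
    |Real.log (1 - x)| ≤ x / (1 - x) := by
  have hpos : 0 < 1 - x := by linarith
  have hlog : Real.log (1 - x) ≤ 0 := Real.log_nonpos (by linarith) (by linarith)
  rw [abs_of_nonpos hlog, ← Real.log_inv]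
  have := Real.log_le_sub_one_of_pos (inv_pos.mpr hpos)
  have heq : (1 - x)⁻¹ - 1 = x / (1 - x) := by field_simp; ring
  linarith [heq ▸ this]

lemma abs_log_one_sub_le_half {x : ℝ} (h0 : 0 ≤ x) (h1 : x ≤ 1/2) :
    |Real.log (1 - x)| ≤ 2 * x := by
  have h2 : x < 1 := by linarith
  have h3 := abs_log_one_sub_le h0 h2
  have hpos : 0 < 1 - x := by linarith
  have : x / (1 - x) ≤ 2 * x := by
    rw [div_le_iff₀ hpos]
    nlinarith
  linarith

lemma hasProd_of_log {g : ℕ → ℝ} (hg : ∀ j, 0 < g j)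
    (h : Summable fun j => Real.log (g j)) :
    HasProd g (Real.exp (∑' j : ℕ, Real.log (g j))) := by
  have hs : HasSum (fun j => Real.log (g j)) (∑' j : ℕ, Real.log (g j)) := h.hasSum
  have ht := (Real.continuous_exp.tendsto _).comp hs
  have : (fun s : Finset ℕ => Real.exp (∑ i ∈ s, Real.log (g i))) =
      fun s : Finset ℕ => ∏ i ∈ s, g i := by
    funext s
    rw [Real.exp_sum]
    exact Finset.prod_congr rfl fun i _ => Real.exp_log (hg i)
  rw [HasProd]
  rw [← this]
  exact ht

lemma base_summable : Summable (fun j : ℕ => 1 / ((j:ℝ) + 1) ^ 2) := by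
  have h : Summable (fun n : ℕ => 1 / (n:ℝ) ^ 2) :=
    Real.summable_one_div_nat_pow.mpr one_lt_two
  have h2 := (summable_nat_add_iff 1).mpr h
  apply h2.congr
  intro j
  push_cast
  ring_nf


section Decomp

variable {q : ℝ}

lemma cast_aux (a : ℝ) (j : ℕ) : ((j + NN a : ℕ) : ℝ) + 1 = (j : ℝ) + NN a + 1 := by
  push_cast; ring

lemma eps_tail_le (hq0 : 0 < q) (hq1 : q < 1) (hqe : Real.exp (-1) ≤ q) (a : ℝ) (j : ℕ) :
    eps (((j + NN a : ℕ) : ℝ) + 1) q a ≤ K a / ((j:ℝ) + 1) ^ 2 ∧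
      eps (((j + NN a : ℕ) : ℝ) + 1) q a ≤ 1 / 2 := by
  set c : ℝ := ((j + NN a : ℕ) : ℝ) + 1 with hc
  have hcv : c = (j : ℝ) + NN a + 1 := cast_aux a j
  have hj : (0:ℝ) ≤ (j:ℝ) := Nat.cast_nonneg j
  have hN : (0:ℝ) ≤ (NN a : ℝ) := Nat.cast_nonneg _
  have hcpos : 0 < c := by rw [hcv]; linarith
  have h1 := eps_le hq0 hq1 hqe a hcpos
  have h2K : 2 * K a ≤ c ^ 2 := by rw [hcv]; exact twoK_le a j
  have hj1 : (0:ℝ) < (j:ℝ) + 1 := by linarith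
  constructor
  · refine h1.trans ?_
    rw [div_le_div_iff₀ (by positivity) (by positivity)]
    have hsq : ((j:ℝ) + 1) ^ 2 ≤ c ^ 2 := by
      rw [hcv]; nlinarith
    nlinarith [K_nonneg a]
  · refine h1.trans ?_
    rw [div_le_div_iff₀ (by positivity) (by norm_num)]
    linarith

lemma rat_tail_mem (hq0 : 0 < q) (hq1 : q < 1) (hqe : Real.exp (-1) ≤ q) (a : ℝ) (j : ℕ) :
    1/2 ≤ rat (j + NN a) q a ∧ rat (j + NN a) q a ≤ 1 := by
  have h := eps_tail_le hq0 hq1 hqe a j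
  have h0 := eps_nonneg hq0 a (((j + NN a : ℕ) : ℝ) + 1)
  constructor
  · rw [rat]; linarith [h.2]
  · rw [rat]; linarith

lemma abs_log_rat_tail (hq0 : 0 < q) (hq1 : q < 1) (hqe : Real.exp (-1) ≤ q) (a : ℝ) (j : ℕ) :
    |Real.log (rat (j + NN a) q a)| ≤ 2 * (K a / ((j:ℝ) + 1) ^ 2) := by
  have h := eps_tail_le hq0 hq1 hqe a j
  have h0 := eps_nonneg hq0 a (((j + NN a : ℕ) : ℝ) + 1)
  have hlog : |Real.log (1 - eps (((j + NN a : ℕ) : ℝ) + 1) q a)| ≤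
      2 * eps (((j + NN a : ℕ) : ℝ) + 1) q a :=
    abs_log_one_sub_le_half h0 h.2
  rw [rat]
  refine hlog.trans ?_
  linarith [h.1]

lemma summable_log_rat_tail (hq0 : 0 < q) (hq1 : q < 1) (hqe : Real.exp (-1) ≤ q) (a : ℝ) :
    Summable (fun j => Real.log (rat (j + NN a) q a)) := by
  refine Summable.of_norm_bounded (g := fun j => 2 * (K a / ((j:ℝ) + 1) ^ 2)) ?_
    (fun j => abs_log_rat_tail hq0 hq1 hqe a j)
  refine (base_summable.mul_left (2 * K a)).congr (fun j => ?_)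
  ring

lemma hasProd_tail (hq0 : 0 < q) (hq1 : q < 1) (hqe : Real.exp (-1) ≤ q) (a : ℝ) :
    HasProd (fun j => rat (j + NN a) q a)
      (Real.exp (∑' j : ℕ, Real.log (rat (j + NN a) q a))) :=
  hasProd_of_log (fun j => by linarith [(rat_tail_mem hq0 hq1 hqe a j).1])
    (summable_log_rat_tail hq0 hq1 hqe a)

lemma tprod_rat (hq0 : 0 < q) (hq1 : q < 1) (hqe : Real.exp (-1) ≤ q) (a : ℝ) :
    ∏' j, rat j q a = (∏ j ∈ range (NN a), rat j q a) *
      Real.exp (∑' j : ℕ, Real.log (rat (j + NN a) q a)) := by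
  have h := hasProd_tail hq0 hq1 hqe a
  have h2 := Multipliable.prod_mul_tprod_nat_mul' (f := fun j => rat j q a) (k := NN a) h.multipliable
  rw [← h2, h.tprod_eq]

lemma mult_rat (hq0 : 0 < q) (hq1 : q < 1) (hqe : Real.exp (-1) ≤ q) (a : ℝ) :
    Multipliable (fun j => rat j q a) :=
  ⟨_, HasProd.prod_range_mul (f := fun j => rat j q a) (k := NN a)
    (hasProd_tail hq0 hq1 hqe a)⟩

lemma sq_factor_pos (hq0 : 0 < q) (hq1 : q < 1) (j : ℕ) : 0 < 1 - q ^ ((j:ℝ) + 1) := by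
  have : q ^ ((j:ℝ) + 1) < 1 :=
    Real.rpow_lt_one hq0.le hq1 (by positivity)
  linarith

lemma summable_log_sq (hq0 : 0 < q) (hq1 : q < 1) :
    Summable (fun j : ℕ => Real.log ((1 - q ^ ((j:ℝ) + 1)) ^ 2)) := by
  have hgeo : Summable (fun j : ℕ => (2 * q / (1 - q)) * 2 * q ^ j) :=
    ((summable_geometric_of_lt_one hq0.le hq1).mul_left _)
  refine Summable.of_norm_bounded hgeo (fun j => ?_)
  have hx0 : 0 < q ^ ((j:ℝ) + 1) := Real.rpow_pos_of_pos hq0 _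
  have hx1 : q ^ ((j:ℝ) + 1) < 1 :=
    Real.rpow_lt_one hq0.le hq1 (by positivity)
  have hxq : q ^ ((j:ℝ) + 1) = q * q ^ j := by
    have : ((j:ℝ) + 1) = ((j + 1 : ℕ) : ℝ) := by push_cast; ring
    rw [this, Real.rpow_natCast, pow_succ]
    ring
  have hle : q ^ ((j:ℝ) + 1) ≤ q := by
    rw [hxq]
    nlinarith [pow_le_one₀ hq0.le hq1.le (n := j), pow_nonneg hq0.le j]
  have hlog : Real.log ((1 - q ^ ((j:ℝ) + 1)) ^ 2) =
      2 * Real.log (1 - q ^ ((j:ℝ) + 1)) := by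
    rw [Real.log_pow]
    norm_num
  rw [Real.norm_eq_abs, hlog, abs_mul, abs_two]
  have hb := abs_log_one_sub_le hx0.le hx1
  have hq1' : 0 < 1 - q := by linarith
  have hle' : q * q ^ j ≤ q := hxq ▸ hle
  have hpn : (0:ℝ) ≤ q * q ^ j := by positivity
  have hd : q ^ ((j:ℝ) + 1) / (1 - q ^ ((j:ℝ) + 1)) ≤ q * q ^ j / (1 - q) := by
    have hpos1 : 0 < 1 - q * q ^ j := by linarith
    rw [hxq, div_le_div_iff₀ hpos1 hq1']
    nlinarith
  have : |Real.log (1 - q ^ ((j:ℝ) + 1))| ≤ q * q ^ j / (1 - q) := hb.trans hd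
  calc 2 * |Real.log (1 - q ^ ((j:ℝ) + 1))| ≤ 2 * (q * q ^ j / (1 - q)) := by linarith
    _ = 2 * q / (1 - q) * 2 * q ^ j / 2 := by ring
    _ ≤ 2 * q / (1 - q) * 2 * q ^ j := by
        have : 0 ≤ 2 * q / (1 - q) * 2 * q ^ j := by positivity
        linarith

lemma hasProd_sq (hq0 : 0 < q) (hq1 : q < 1) :
    HasProd (fun j : ℕ => (1 - q ^ ((j:ℝ) + 1)) ^ 2)
      (Real.exp (∑' j : ℕ, Real.log ((1 - q ^ ((j:ℝ) + 1)) ^ 2))) :=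
  hasProd_of_log (fun j => pow_pos (sq_factor_pos hq0 hq1 j) 2)
    (summable_log_sq hq0 hq1)

lemma tprod_sq_pos (hq0 : 0 < q) (hq1 : q < 1) :
    0 < ∏' j : ℕ, (1 - q ^ ((j:ℝ) + 1)) ^ 2 := by
  rw [(hasProd_sq hq0 hq1).tprod_eq]
  exact Real.exp_pos _

end Decomp

noncomputable def Phi (a q : ℝ) : ℝ :=
  (1 - q ^ a) / (1 - q) * (∏ j ∈ Finset.range (NN a), rat j q a) *
    Real.exp (∑' j : ℕ, Real.log (rat (j + NN a) q a))

lemma rat_tendsto (a : ℝ) (j : ℕ) :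
    Tendsto (fun q : ℝ => rat j q a) (nhdsWithin 1 (Ioo (0:ℝ) 1))
      (nhds (1 - a ^ 2 / ((j:ℝ) + 1) ^ 2)) := by
  have h := eps_tendsto a (c := (j:ℝ) + 1) (by positivity)
  simpa [rat] using tendsto_const_nhds.sub h

lemma limit_tail_ge (a : ℝ) (j : ℕ) :
    (1:ℝ)/2 ≤ 1 - a ^ 2 / ((j:ℝ) + NN a + 1) ^ 2 := by
  have h2K := twoK_le a j
  have hK := sq_le_K a
  have hj : (0:ℝ) ≤ (j:ℝ) := Nat.cast_nonneg j
  have hN : (0:ℝ) ≤ (NN a : ℝ) := Nat.cast_nonneg _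
  have hx : (0:ℝ) < ((j:ℝ) + NN a + 1) ^ 2 := by positivity
  have : a ^ 2 / ((j:ℝ) + NN a + 1) ^ 2 ≤ 1/2 := by
    rw [div_le_div_iff₀ hx (by norm_num)]
    nlinarith
  linarith

lemma limit_tail_pos (a : ℝ) (j : ℕ) :
    (0:ℝ) < 1 - a ^ 2 / ((j:ℝ) + NN a + 1) ^ 2 :=
  lt_of_lt_of_le (by norm_num) (limit_tail_ge a j)

lemma tail_log_tendsto (a : ℝ) (j : ℕ) :
    Tendsto (fun q : ℝ => Real.log (rat (j + NN a) q a)) (nhdsWithin 1 (Ioo (0:ℝ) 1))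
      (nhds (Real.log (1 - a ^ 2 / ((j:ℝ) + NN a + 1) ^ 2))) := by
  have hc : (0:ℝ) < ((j + NN a : ℕ) : ℝ) + 1 := by positivity
  have h1 : Tendsto (fun q : ℝ => rat (j + NN a) q a) (nhdsWithin 1 (Ioo (0:ℝ) 1))
      (nhds (1 - a ^ 2 / ((j:ℝ) + NN a + 1) ^ 2)) := by
    have h := eps_tendsto a hc
    rw [cast_aux a j] at h
    simpa [rat, cast_aux a j] using tendsto_const_nhds.sub h
  exact (Real.continuousAt_log (limit_tail_pos a j).ne').tendsto.comp h1

lemma summable_log_limit (a : ℝ) :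
    Summable (fun j : ℕ => Real.log (1 - a ^ 2 / ((j:ℝ) + NN a + 1) ^ 2)) := by
  have hb : Summable (fun j : ℕ => 2 * (K a / ((j:ℝ) + 1) ^ 2)) := by
    refine (base_summable.mul_left (2 * K a)).congr (fun j => ?_)
    ring
  refine Summable.of_norm_bounded hb (fun j => ?_)
  have hj : (0:ℝ) ≤ (j:ℝ) := Nat.cast_nonneg j
  have hN : (0:ℝ) ≤ (NN a : ℝ) := Nat.cast_nonneg _
  have hx : (0:ℝ) < ((j:ℝ) + NN a + 1) ^ 2 := by positivity
  have hx0 : 0 ≤ a ^ 2 / ((j:ℝ) + NN a + 1) ^ 2 := by positivity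
  have hx12 : a ^ 2 / ((j:ℝ) + NN a + 1) ^ 2 ≤ 1/2 := by
    linarith [limit_tail_ge a j]
  have h1 := abs_log_one_sub_le_half hx0 hx12
  rw [Real.norm_eq_abs]
  refine h1.trans ?_
  have hKa := sq_le_K a
  have h2 : a ^ 2 / ((j:ℝ) + NN a + 1) ^ 2 ≤ K a / ((j:ℝ) + 1) ^ 2 := by
    rw [div_le_div_iff₀ hx (by positivity)]
    have hsq : ((j:ℝ) + 1) ^ 2 ≤ ((j:ℝ) + NN a + 1) ^ 2 := by nlinarith
    exact mul_le_mul hKa hsq (by positivity) (K_nonneg a)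
  linarith

lemma tail_sum_tendsto (a : ℝ) :
    Tendsto (fun q : ℝ => ∑' j : ℕ, Real.log (rat (j + NN a) q a))
      (nhdsWithin 1 (Ioo (0:ℝ) 1))
      (nhds (∑' j : ℕ, Real.log (1 - a ^ 2 / ((j:ℝ) + NN a + 1) ^ 2))) := by
  have hb : Summable (fun j : ℕ => 2 * (K a / ((j:ℝ) + 1) ^ 2)) := by
    refine (base_summable.mul_left (2 * K a)).congr (fun j => ?_)
    ring
  refine tendsto_tsum_of_dominated_convergence hb (fun j => tail_log_tendsto a j) ?_
  have hev : ∀ᶠ q : ℝ in nhdsWithin 1 (Ioo (0:ℝ) 1), Real.exp (-1) < q := by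
    apply eventually_nhdsWithin_of_eventually_nhds
    apply eventually_gt_nhds
    have h := Real.exp_lt_exp.mpr (show (-1:ℝ) < 0 by norm_num)
    rwa [Real.exp_zero] at h
  filter_upwards [eventually_mem_nhdsWithin, hev] with q hq hq2
  intro k
  rw [Real.norm_eq_abs]
  exact abs_log_rat_tail hq.1 hq.2 hq2.le a k

lemma Phi_tendsto (a : ℝ) :
    Tendsto (Phi a) (nhdsWithin 1 (Ioo (0:ℝ) 1))
      (nhds (a * (∏ j ∈ Finset.range (NN a), (1 - a ^ 2 / ((j:ℝ) + 1) ^ 2)) *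
        Real.exp (∑' j : ℕ, Real.log (1 - a ^ 2 / ((j:ℝ) + NN a + 1) ^ 2)))) := by
  have h1 := slope_tendsto a
  have h2 := tendsto_finset_prod (f := fun (j : ℕ) (q : ℝ) => rat j q a)
    (x := nhdsWithin 1 (Ioo (0:ℝ) 1)) (a := fun j : ℕ => 1 - a ^ 2 / ((j:ℝ) + 1) ^ 2)
    (Finset.range (NN a)) (fun j _ => rat_tendsto a j)
  have h3 := (Real.continuous_exp.tendsto _).comp (tail_sum_tendsto a)
  exact (h1.mul h2).mul h3

lemma euler_id (a : ℝ) :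
    a * (∏ j ∈ Finset.range (NN a), (1 - a ^ 2 / ((j:ℝ) + 1) ^ 2)) *
      Real.exp (∑' j : ℕ, Real.log (1 - a ^ 2 / ((j:ℝ) + NN a + 1) ^ 2)) =
      Real.sin (Real.pi * a) / Real.pi := by
  have hsum := summable_log_limit a
  have hps := hsum.hasSum.tendsto_sum_nat
  have hexp := (Real.continuous_exp.tendsto _).comp hps
  have hprodm : ∀ m : ℕ, Real.exp (∑ j ∈ Finset.range m,
      Real.log (1 - a ^ 2 / ((j:ℝ) + NN a + 1) ^ 2)) =
      ∏ j ∈ Finset.range m, (1 - a ^ 2 / ((j:ℝ) + NN a + 1) ^ 2) := by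
    intro m
    rw [Real.exp_sum]
    exact Finset.prod_congr rfl fun j _ => Real.exp_log (limit_tail_pos a j)
  have h2 : Tendsto (fun m : ℕ =>
      Real.pi * a * (∏ j ∈ Finset.range (NN a), (1 - a ^ 2 / ((j:ℝ) + 1) ^ 2)) *
        ∏ j ∈ Finset.range m, (1 - a ^ 2 / ((j:ℝ) + NN a + 1) ^ 2)) atTop
      (nhds (Real.pi * a * (∏ j ∈ Finset.range (NN a), (1 - a ^ 2 / ((j:ℝ) + 1) ^ 2)) *
        Real.exp (∑' j : ℕ, Real.log (1 - a ^ 2 / ((j:ℝ) + NN a + 1) ^ 2)))) := by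
    refine (hexp.const_mul
      (Real.pi * a * (∏ j ∈ Finset.range (NN a), (1 - a ^ 2 / ((j:ℝ) + 1) ^ 2)))).congr
      (fun m => ?_)
    rw [Function.comp_apply, hprodm m]
  have h3 : (fun m : ℕ =>
      Real.pi * a * (∏ j ∈ Finset.range (NN a), (1 - a ^ 2 / ((j:ℝ) + 1) ^ 2)) *
        ∏ j ∈ Finset.range m, (1 - a ^ 2 / ((j:ℝ) + NN a + 1) ^ 2)) =
      fun m : ℕ => Real.pi * a *
        ∏ j ∈ Finset.range (NN a + m), (1 - a ^ 2 / ((j:ℝ) + 1) ^ 2) := by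
    funext m
    rw [Finset.prod_range_add]
    have : ∀ x ∈ Finset.range m, (1 - a ^ 2 / (((NN a + x : ℕ) : ℝ) + 1) ^ 2) =
        (1 - a ^ 2 / ((x:ℝ) + NN a + 1) ^ 2) := by
      intro x _
      push_cast
      ring_nf
    rw [Finset.prod_congr rfl this]
    ring
  rw [h3] at h2
  have h4 : Tendsto (fun m : ℕ => Real.pi * a *
      ∏ j ∈ Finset.range (NN a + m), (1 - a ^ 2 / ((j:ℝ) + 1) ^ 2)) atTop
      (nhds (Real.sin (Real.pi * a))) := by
    have hshift : Tendsto (fun m : ℕ => NN a + m) atTop atTop := by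
      refine (tendsto_add_atTop_nat (NN a)).congr (fun m => ?_)
      exact Nat.add_comm m (NN a)
    exact (Real.tendsto_euler_sin_prod a).comp hshift
  have heq := tendsto_nhds_unique h2 h4
  have hπ : Real.pi ≠ 0 := Real.pi_ne_zero
  rw [eq_div_iff hπ, ← heq]
  ring

lemma Phi_sin (a : ℝ) :
    Tendsto (Phi a) (nhdsWithin 1 (Ioo (0:ℝ) 1))
      (nhds (Real.sin (Real.pi * a) / Real.pi)) := by
  have h := Phi_tendsto a
  rwa [euler_id a] at h

lemma num_eq {q : ℝ} (hq0 : 0 < q) (hq1 : q < 1) (hqe : Real.exp (-1) ≤ q) (a : ℝ) :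
    (1 - q ^ a) * (∏' j : ℕ, ((1 - q ^ (((j:ℝ) + 1) + a)) * (1 - q ^ (((j:ℝ) + 1) - a)))) =
      Phi a q * ((1 - q) * ∏' j : ℕ, (1 - q ^ ((j:ℝ) + 1)) ^ 2) := by
  have hfac : ∀ j : ℕ, (1 - q ^ (((j:ℝ) + 1) + a)) * (1 - q ^ (((j:ℝ) + 1) - a)) =
      (1 - q ^ ((j:ℝ) + 1)) ^ 2 * rat j q a := by
    intro j
    rw [rat]
    exact factor_eq hq0 hq1 a (by positivity)
  rw [tprod_congr hfac,
    Multipliable.tprod_mul (hasProd_sq hq0 hq1).multipliable (mult_rat hq0 hq1 hqe a),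
    tprod_rat hq0 hq1 hqe a, Phi]
  have hne : (1:ℝ) - q ≠ 0 := sub_ne_zero.mpr (ne_of_gt (by linarith))
  field_simp

end ThetaAux

open ThetaAux in
/-- The `q → 1⁻` limit of the ratio of theta-like products:
`lim_{q→1⁻} [(1−q^u) ∏_{j≥1} (1−q^{j+u})(1−q^{j−u})] /
           [(1−q^v) ∏_{j≥1} (1−q^{j+v})(1−q^{j−v})] = sin(πu)/sin(πv)`. -/
theorem theta_ratio_limit (u v : ℝ) (hv : Real.sin (Real.pi * v) ≠ 0) :
    Tendsto
      (fun q : ℝ =>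
        ((1 - q ^ u) *
            ∏' j : ℕ, ((1 - q ^ (((j : ℝ) + 1) + u)) * (1 - q ^ (((j : ℝ) + 1) - u)))) /
          ((1 - q ^ v) *
            ∏' j : ℕ, ((1 - q ^ (((j : ℝ) + 1) + v)) * (1 - q ^ (((j : ℝ) + 1) - v)))))
      (nhdsWithin 1 (Set.Ioo (0 : ℝ) 1))
      (nhds (Real.sin (Real.pi * u) / Real.sin (Real.pi * v))) := by
  have hπ : Real.pi ≠ 0 := Real.pi_ne_zero
  have hvne : Real.sin (Real.pi * v) / Real.pi ≠ 0 := div_ne_zero hv hπ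
  have h := (Phi_sin u).div (Phi_sin v) hvne
  have hval : Real.sin (Real.pi * u) / Real.pi / (Real.sin (Real.pi * v) / Real.pi) =
      Real.sin (Real.pi * u) / Real.sin (Real.pi * v) := by
    rw [div_div_div_comm, div_self hπ, div_one]
  rw [hval] at h
  refine h.congr' ?_
  have hev : ∀ᶠ q : ℝ in nhdsWithin 1 (Set.Ioo (0:ℝ) 1), Real.exp (-1) < q := by
    apply eventually_nhdsWithin_of_eventually_nhds
    apply eventually_gt_nhds
    have h := Real.exp_lt_exp.mpr (show (-1:ℝ) < 0 by norm_num)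
    rwa [Real.exp_zero] at h
  filter_upwards [eventually_mem_nhdsWithin, hev] with q hq hq2
  have hD : ((1 - q) * ∏' j : ℕ, (1 - q ^ ((j:ℝ) + 1)) ^ 2) ≠ 0 :=
    mul_ne_zero (sub_ne_zero.mpr (ne_of_gt (by linarith [hq.2])))
      (tprod_sq_pos hq.1 hq.2).ne'
  rw [num_eq hq.1 hq.2 hq2.le u, num_eq hq.1 hq.2 hq2.le v,
    mul_div_mul_right _ _ hD]
  rfl
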